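/- Let x_m > 0 and 0 < α ≤ 1, and let μ be the Pareto measure on ℝ, i.e., the measure with Lebesgue density f(x) = α·x_m^α / x^{α+1} for x ≥ x_m and f(x) = 0 for x < x_m. Then μ is a probability measure; its mean is infinite, ∫ x dμ(x) = ∞ (as an integral in [0,∞]); for every θ > x_m one has F(θ) = μ((-∞,θ]) = 1 − (x_m/θ)^α > 0; and for every θ > x_m the quantity ζ(θ) = ( 2·∫_{[0,θ]} x dμ(x) + θ·μ((θ,∞)) ) / F(θ) is a finite real number. -/

import Mathlib

open MeasureTheory
open Real Set ProbabilityTheory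

/-- Let `μ` be the Pareto measure with scale `x_m > 0` and tail index
`0 < α ≤ 1`, i.e. the measure with Lebesgue density `α x_m^α / x^(α+1)` on `[x_m, ∞)` and `0`
below `x_m`. Then `μ` is a probability measure; its mean is infinite
(`∫ x dμ = ∞` in `[0,∞]`); for every `θ > x_m`, `F(θ) = μ((-∞,θ]) = 1 - (x_m/θ)^α > 0`; and
for every `θ > x_m` the average peak AoI
`ζ(θ) = (2 ∫_{[0,θ]} x dμ + θ μ((θ,∞))) / μ((-∞,θ])` of the fixed-threshold policy is a finite
quantity (the `[0,∞]`-valued expression is not `∞`). -/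
theorem stmt_16 (x_m α : ℝ) (hx : 0 < x_m) (hα0 : 0 < α) (hα1 : α ≤ 1)
    (μ : Measure ℝ)
    (hμ : μ = volume.withDensity
        (fun x : ℝ => ENNReal.ofReal (if x_m ≤ x then α * x_m ^ α / x ^ (α + 1) else 0))) :
    IsProbabilityMeasure μ
      ∧ (∫⁻ x : ℝ, ENNReal.ofReal x ∂μ) = ⊤
      ∧ (∀ θ : ℝ, x_m < θ →
          (μ (Set.Iic θ)).toReal = 1 - (x_m / θ) ^ α ∧ 0 < (μ (Set.Iic θ)).toReal)
      ∧ (∀ θ : ℝ, x_m < θ →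
          (2 * ∫⁻ x in Set.Icc 0 θ, ENNReal.ofReal x ∂μ
              + ENNReal.ofReal θ * μ (Set.Ioi θ)) / μ (Set.Iic θ) ≠ ⊤) := by
  -- the density coincides with mathlib's Pareto pdf
  have hdens : (fun x : ℝ => ENNReal.ofReal (if x_m ≤ x then α * x_m ^ α / x ^ (α + 1) else 0))
      = paretoPDF x_m α := by
    funext y
    rw [paretoPDF_eq]
    congr 1
    split_ifs with h
    · have hy : (0:ℝ) < y := lt_of_lt_of_le hx h
      rw [rpow_neg hy.le, div_eq_mul_inv]
    · rfl
  have hμp : μ = paretoMeasure x_m α := by rw [hμ, hdens]; rfl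
  have hprob : IsProbabilityMeasure μ := hμp ▸ isProbabilityMeasure_paretoMeasure hx hα0
  have hdmeas : Measurable
      (fun x : ℝ => ENNReal.ofReal (if x_m ≤ x then α * x_m ^ α / x ^ (α + 1) else 0)) := by
    rw [hdens]
    exact (measurable_paretoPDFReal x_m α).ennreal_ofReal
  -- tail probability
  have htail : ∀ θ : ℝ, x_m < θ → μ (Set.Ioi θ) = ENNReal.ofReal ((x_m / θ) ^ α) := by
    intro θ hθ
    have hθ0 : (0:ℝ) < θ := hx.trans hθ
    rw [hμ, withDensity_apply _ measurableSet_Ioi]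
    have h1 : ∀ x ∈ Ioi θ, ENNReal.ofReal (if x_m ≤ x then α * x_m ^ α / x ^ (α + 1) else 0)
        = ENNReal.ofReal (α * x_m ^ α * x ^ (-(α + 1))) := by
      intro x hx'
      have hmx : x_m ≤ x := le_of_lt (hθ.trans hx')
      rw [if_pos hmx, rpow_neg (hθ0.trans hx').le, div_eq_mul_inv]
    rw [setLIntegral_congr_fun measurableSet_Ioi h1]
    have hint : IntegrableOn (fun x : ℝ => α * x_m ^ α * x ^ (-(α + 1))) (Ioi θ) :=
      (integrableOn_Ioi_rpow_of_lt (by linarith) hθ0).const_mul _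
    rw [← ofReal_integral_eq_lintegral_ofReal hint ?nn]
    case nn =>
      refine (ae_restrict_iff' measurableSet_Ioi).mpr
        (Filter.Eventually.of_forall fun x (hx' : x ∈ Ioi θ) => ?_)
      simp only [Pi.zero_apply]
      have hx0 : (0:ℝ) < x := hθ0.trans hx'
      positivity
    rw [MeasureTheory.integral_const_mul, integral_Ioi_rpow_of_lt (by linarith) hθ0]
    congr 1
    rw [show -(α + 1) + 1 = -α by ring, Real.div_rpow hx.le hθ0.le, rpow_neg hθ0.le]
    have hθα : (0:ℝ) < θ ^ α := rpow_pos_of_pos hθ0 α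
    field_simp
  have hfrac_lt : ∀ θ : ℝ, x_m < θ → (x_m / θ) ^ α < 1 := fun θ hθ =>
    rpow_lt_one (div_nonneg hx.le (hx.trans hθ).le) ((div_lt_one (hx.trans hθ)).mpr hθ) hα0
  have hfrac_nn : ∀ θ : ℝ, x_m < θ → (0:ℝ) ≤ (x_m / θ) ^ α := fun θ hθ => by
    have hθ0 : (0:ℝ) < θ := hx.trans hθ
    positivity
  -- CDF
  have hcdf : ∀ θ : ℝ, x_m < θ → μ (Set.Iic θ) = ENNReal.ofReal (1 - (x_m / θ) ^ α) := by
    intro θ hθ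
    have h2 := measure_compl (μ := μ) (measurableSet_Ioi (a := θ)) (measure_ne_top μ _)
    rw [compl_Ioi] at h2
    rw [h2, measure_univ, htail θ hθ, ← ENNReal.ofReal_one,
      ← ENNReal.ofReal_sub _ (hfrac_nn θ hθ)]
  refine ⟨hprob, ?_, ?_, ?_⟩
  · -- infinite mean
    rw [hμ, lintegral_withDensity_eq_lintegral_mul _ hdmeas (by fun_prop)]
    set c : ℝ := max x_m 1 with hc
    have hc0 : (0:ℝ) < c := lt_of_lt_of_le hx (le_max_left _ _)
    have hne : α * x_m ^ α ≠ 0 := by positivity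
    have hIoi : (∫⁻ x in Ioi c, ENNReal.ofReal (α * x_m ^ α * x ^ (-α))) = ⊤ := by
      by_contra h'
      have hm : Measurable fun x : ℝ => α * x_m ^ α * x ^ (-α) :=
        (measurable_id.pow_const _).const_mul _
      have hnn2 : (0 : ℝ → ℝ) ≤ᵐ[volume.restrict (Ioi c)]
          fun x : ℝ => α * x_m ^ α * x ^ (-α) := by
        refine (ae_restrict_iff' measurableSet_Ioi).mpr
          (Filter.Eventually.of_forall fun x (hx' : x ∈ Ioi c) => ?_)
        simp only [Pi.zero_apply]
        have hx0 : (0:ℝ) < x := hc0.trans hx'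
        positivity
      have hInt := (lintegral_ofReal_ne_top_iff_integrable hm.aestronglyMeasurable hnn2).mp h'
      have h'' : IntegrableOn (fun x : ℝ => x ^ (-α)) (Ioi c) := by
        have heq : (fun x : ℝ => x ^ (-α))
            = fun x : ℝ => (α * x_m ^ α)⁻¹ * (α * x_m ^ α * x ^ (-α)) := by
          funext x; rw [inv_mul_cancel_left₀ hne]
        rw [IntegrableOn, heq]
        exact hInt.const_mul _
      have := (integrableOn_Ioi_rpow_iff hc0).mp h''
      linarith
    refine top_unique ?_
    rw [← hIoi]
    refine le_trans (le_of_eq (setLIntegral_congr_fun measurableSet_Ioi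
      ?_)) (setLIntegral_le_lintegral _ _)
    intro x hx'
    have hx0 : (0:ℝ) < x := hc0.trans hx'
    have hmx : x_m ≤ x := le_of_lt (lt_of_le_of_lt (le_max_left _ _) hx')
    simp only [Pi.mul_apply]
    rw [if_pos hmx, ← ENNReal.ofReal_mul (by positivity)]
    congr 1
    rw [rpow_add hx0, rpow_one, rpow_neg hx0.le]
    field_simp
  · -- CDF values
    intro θ hθ
    rw [hcdf θ hθ, ENNReal.toReal_ofReal (by linarith [hfrac_lt θ hθ])]
    exact ⟨rfl, by linarith [hfrac_lt θ hθ]⟩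
  · -- finiteness of ζ
    intro θ hθ
    have hθ0 : (0:ℝ) < θ := hx.trans hθ
    have hden : μ (Set.Iic θ) ≠ 0 := by
      rw [hcdf θ hθ]
      simp only [ne_eq, ENNReal.ofReal_eq_zero, not_le]
      linarith [hfrac_lt θ hθ]
    have hA : (∫⁻ x in Set.Icc 0 θ, ENNReal.ofReal x ∂μ) ≤ ENNReal.ofReal θ * μ (Set.Icc 0 θ) := by
      rw [← setLIntegral_const]
      exact setLIntegral_mono' measurableSet_Icc fun x hx' => ENNReal.ofReal_le_ofReal hx'.2
    have hA' : (∫⁻ x in Set.Icc 0 θ, ENNReal.ofReal x ∂μ) ≠ ⊤ :=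
      ne_top_of_le_ne_top (ENNReal.mul_ne_top ENNReal.ofReal_ne_top (measure_ne_top μ _)) hA
    have hnum : (2 * ∫⁻ x in Set.Icc 0 θ, ENNReal.ofReal x ∂μ
        + ENNReal.ofReal θ * μ (Set.Ioi θ)) ≠ ⊤ := by
      refine ENNReal.add_ne_top.mpr ⟨ENNReal.mul_ne_top (by norm_num) hA', ?_⟩
      exact ENNReal.mul_ne_top ENNReal.ofReal_ne_top (measure_ne_top μ _)
    exact (ENNReal.div_lt_top hnum hden).ne
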